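/- Let m > 0, ω > 0, and let h satisfy 0 < hω < 2. If H is a real symmetric 2×2 matrix satisfying M_RK4(h)ᵀ · H · M_RK4(h) = H, then H = 0. In other words, the fourth-order Runge–Kutta discretization of the harmonic oscillator conserves no nontrivial quadratic energy function. -/

import Mathlib

open Matrix

/-- The fourth-order Runge–Kutta transition matrix for the harmonic oscillator. -/
noncomputable def MRK4 (m ω h : ℝ) : Matrix (Fin 2) (Fin 2) ℝ :=
  !![1 - h ^ 2 * ω ^ 2 / 2 + h ^ 4 * ω ^ 4 / 24, h / m * (1 - h ^ 2 * ω ^ 2 / 6);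
     -h * m * ω ^ 2 * (1 - h ^ 2 * ω ^ 2 / 6), 1 - h ^ 2 * ω ^ 2 / 2 + h ^ 4 * ω ^ 4 / 24]

lemma rk4_aux (a b c p q s : ℝ) (h1 : b * c < 0) (h2 : a ^ 2 - b * c < 1)
    (E1 : (a ^ 2 - 1) * p + 2 * a * c * q + c ^ 2 * s = 0)
    (E2 : a * b * p + (a ^ 2 + b * c - 1) * q + a * c * s = 0)
    (E3 : b ^ 2 * p + 2 * a * b * q + (a ^ 2 - 1) * s = 0) :
    p = 0 ∧ q = 0 ∧ s = 0 := by
  set d : ℝ := a ^ 2 - b * c with hd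
  have hD : (d - 1) * ((d - 1) ^ 2 - 4 * (b * c)) < 0 := by
    apply mul_neg_of_neg_of_pos (by linarith)
    nlinarith [sq_nonneg (d - 1)]
  have hDne : (d - 1) * ((d - 1) ^ 2 - 4 * (b * c)) ≠ 0 := ne_of_lt hD
  refine ⟨?_, ?_, ?_⟩
  · have : p * ((d - 1) * ((d - 1) ^ 2 - 4 * (b * c))) = 0 := by
      linear_combination ((a ^ 2 + b * c - 1) * (a ^ 2 - 1) - 2 * a ^ 2 * b * c) * E1
        - (2 * a * c * (a ^ 2 - 1) - 2 * a * b * c ^ 2) * E2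
        + c ^ 2 * (a ^ 2 - b * c + 1) * E3
    exact (mul_eq_zero.mp this).resolve_right hDne
  · have : q * ((d - 1) * ((d - 1) ^ 2 - 4 * (b * c))) = 0 := by
      linear_combination (-(a * b * (a ^ 2 - 1) - a * c * b ^ 2)) * E1
        + ((a ^ 2 - 1) ^ 2 - b ^ 2 * c ^ 2) * E2
        - (a * c * (a ^ 2 - 1) - a * b * c ^ 2) * E3
    exact (mul_eq_zero.mp this).resolve_right hDne
  · have : s * ((d - 1) * ((d - 1) ^ 2 - 4 * (b * c))) = 0 := by
      linear_combination b ^ 2 * (a ^ 2 - b * c + 1) * E1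
        - 2 * a * b * (a ^ 2 - 1 - b * c) * E2
        + ((a ^ 2 - 1) * (a ^ 2 + b * c - 1) - 2 * a ^ 2 * b * c) * E3
    exact (mul_eq_zero.mp this).resolve_right hDne

/-- The RK4 discretization of the harmonic oscillator conserves no nontrivial
quadratic energy: if `H` is symmetric and `M_RK4(h)ᵀ H M_RK4(h) = H`, then `H = 0`. -/
theorem rk4_no_quadratic_invariant
    (m ω h : ℝ) (hm : 0 < m) (hω : 0 < ω)
    (hh₁ : 0 < h * ω) (hh₂ : h * ω < 2)
    (H : Matrix (Fin 2) (Fin 2) ℝ) (hsymm : H.IsSymm)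
    (hcons : (MRK4 m ω h)ᵀ * H * MRK4 m ω h = H) :
    H = 0 := by
  set a : ℝ := 1 - h ^ 2 * ω ^ 2 / 2 + h ^ 4 * ω ^ 4 / 24 with ha
  set b : ℝ := h / m * (1 - h ^ 2 * ω ^ 2 / 6) with hb
  set c : ℝ := -h * m * ω ^ 2 * (1 - h ^ 2 * ω ^ 2 / 6) with hc
  have hmne : m ≠ 0 := ne_of_gt hm
  have hx0 : 0 < h ^ 2 * ω ^ 2 := by nlinarith
  have hx4 : h ^ 2 * ω ^ 2 < 4 := by nlinarith
  have hbc : b * c = -(h ^ 2 * ω ^ 2) * (1 - h ^ 2 * ω ^ 2 / 6) ^ 2 := by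
    rw [hb, hc]; field_simp
  have hk : 0 < 1 - h ^ 2 * ω ^ 2 / 6 := by linarith
  have h1 : b * c < 0 := by
    rw [hbc]
    nlinarith [mul_pos hk hk]
  have h2 : a ^ 2 - b * c < 1 := by
    rw [hbc, ha]
    nlinarith [mul_pos (mul_pos (mul_pos hx0 hx0) hx0)
      (show (0:ℝ) < 8 - h ^ 2 * ω ^ 2 by linarith)]
  have hq : H 1 0 = H 0 1 := by
    simpa using congrFun (congrFun hsymm 0) 1
  have h00 : MRK4 m ω h 0 0 = a := by simp [MRK4, ha]
  have h01 : MRK4 m ω h 0 1 = b := by simp [MRK4, hb]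
  have h10 : MRK4 m ω h 1 0 = c := by simp [MRK4]; rw [hc]; ring
  have h11 : MRK4 m ω h 1 1 = a := by simp [MRK4, ha]
  have E1 := congrFun (congrFun hcons 0) 0
  have E2 := congrFun (congrFun hcons 0) 1
  have E3 := congrFun (congrFun hcons 1) 1
  simp only [Matrix.mul_apply, Matrix.transpose_apply, Fin.sum_univ_two,
    h00, h01, h10, h11] at E1 E2 E3
  rw [hq] at E1 E2 E3
  have key := rk4_aux a b c (H 0 0) (H 0 1) (H 1 1) h1 h2
    (by linear_combination E1) (by linear_combination E2) (by linear_combination E3)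
  ext i j
  fin_cases i <;> fin_cases j <;>
    simp [key.1, key.2.1, key.2.2, hq, Matrix.zero_apply]
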